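/- arXiv:1809.01315 — 8 statements merged into one kernel-verified Lean document; each statement's English description precedes it below -/
import Mathlib

section
/- If S is a bounded, self-adjoint, positive definite invertible operator on a Hilbert space H, and S₁, S₂ are bounded, self-adjoint, positive semidefinite operators with S = S₁ + S₂, then S₁ S⁻¹ S₁ is positive semidefinite and S₁ S⁻¹ S₁ ≤ S₁. -/
open scoped InnerProductSpace ComplexConjugate

theorem stmt0 {H : Type*} [NormedAddCommGroup H] [InnerProductSpace ℂ H] [CompleteSpace H]
    (S Sinv S₁ S₂ : H →L[ℂ] H)
    (hS_sa : IsSelfAdjoint S) (hS1_sa : IsSelfAdjoint S₁) (hS2_sa : IsSelfAdjoint S₂)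
    (hS_pd : ∃ c > 0, ∀ f : H, c * ‖f‖ ^ 2 ≤ (⟪S f, f⟫_ℂ).re)
    (hinv1 : S.comp Sinv = ContinuousLinearMap.id ℂ H)
    (hinv2 : Sinv.comp S = ContinuousLinearMap.id ℂ H)
    (hS1_pos : ∀ f : H, 0 ≤ (⟪S₁ f, f⟫_ℂ).re) (hS2_pos : ∀ f : H, 0 ≤ (⟪S₂ f, f⟫_ℂ).re)
    (hsum : S = S₁ + S₂) :
    (∀ f : H, 0 ≤ (⟪(S₁.comp (Sinv.comp S₁)) f, f⟫_ℂ).re) ∧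
    (∀ f : H, 0 ≤ (⟪((S₁) - (S₁.comp (Sinv.comp S₁))) f, f⟫_ℂ).re) := by
  obtain ⟨c, hc, hS_pd⟩ := hS_pd
  have hS1_symm : ∀ x y : H, ⟪S₁ x, y⟫_ℂ = ⟪x, S₁ y⟫_ℂ :=
    (ContinuousLinearMap.isSelfAdjoint_iff_isSymmetric.mp hS1_sa)
  -- Cauchy-Schwarz for the positive form ⟪S₁ ·, ·⟫
  have hconj : ∀ x y : H, conj ⟪S₁ y, x⟫_ℂ = ⟪S₁ x, y⟫_ℂ := fun x y => by
    rw [inner_conj_symm]; exact (hS1_symm x y).symm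
  have CS : ∀ x y : H, ‖⟪S₁ x, y⟫_ℂ‖ * ‖⟪S₁ y, x⟫_ℂ‖ ≤ (⟪S₁ x, x⟫_ℂ).re * (⟪S₁ y, y⟫_ℂ).re :=
    fun x y => @InnerProductSpace.Core.inner_mul_inner_self_le ℂ H _ _ _
      { inner := fun x y => ⟪S₁ x, y⟫_ℂ
        conj_inner_symm := hconj
        re_inner_nonneg := fun x => hS1_pos x
        add_left := fun x y z => by simp [inner_add_left]
        smul_left := fun x y r => by simp [inner_smul_left]; ring } x y
  have hSinv : ∀ x : H, S (Sinv x) = x := by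
    intro x
    have := congrArg (fun T : H →L[ℂ] H => T x) hinv1
    simpa using this
  have key : ∀ f : H, 0 ≤ (⟪(S₁.comp (Sinv.comp S₁)) f, f⟫_ℂ).re ∧
      (⟪(S₁.comp (Sinv.comp S₁)) f, f⟫_ℂ).re ≤ (⟪S₁ f, f⟫_ℂ).re := by
    intro f
    set g := Sinv (S₁ f) with hg
    have hSg : S g = S₁ f := hSinv (S₁ f)
    have hexpr : (⟪(S₁.comp (Sinv.comp S₁)) f, f⟫_ℂ) = ⟪S₁ f, g⟫_ℂ := by
      calc (⟪(S₁.comp (Sinv.comp S₁)) f, f⟫_ℂ) = ⟪S₁ g, f⟫_ℂ := rfl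
        _ = ⟪g, S₁ f⟫_ℂ := hS1_symm g f
        _ = conj ⟪S₁ f, g⟫_ℂ := (inner_conj_symm _ _).symm
        _ = conj ⟪S g, g⟫_ℂ := by rw [hSg]
        _ = ⟪g, S g⟫_ℂ := inner_conj_symm _ _
        _ = ⟪S g, g⟫_ℂ := (ContinuousLinearMap.isSelfAdjoint_iff_isSymmetric.mp hS_sa g g).symm
        _ = ⟪S₁ f, g⟫_ℂ := by rw [hSg]
    set b := (⟪S₁ f, g⟫_ℂ).re with hb
    have hb_nonneg : 0 ≤ b := by
      have : c * ‖g‖ ^ 2 ≤ (⟪S g, g⟫_ℂ).re := hS_pd g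
      have h1 : (⟪S g, g⟫_ℂ) = ⟪S₁ f, g⟫_ℂ := by rw [hSg]
      nlinarith [sq_nonneg ‖g‖, mul_nonneg hc.le (sq_nonneg ‖g‖), h1 ▸ this]
    constructor
    · rw [hexpr]; exact hb_nonneg
    · -- show b ≤ re ⟪S₁ f, f⟫
      rw [hexpr]
      set a := (⟪S₁ f, f⟫_ℂ).re with ha
      have ha_nonneg : 0 ≤ a := hS1_pos f
      have hd_le : (⟪S₁ g, g⟫_ℂ).re ≤ b := by
        have hsum' : (⟪S g, g⟫_ℂ).re = (⟪S₁ g, g⟫_ℂ).re + (⟪S₂ g, g⟫_ℂ).re := by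
          rw [hsum]; simp [inner_add_left]
        have h1 : (⟪S g, g⟫_ℂ) = ⟪S₁ f, g⟫_ℂ := by rw [hSg]
        have := hS2_pos g
        rw [h1] at hsum'
        linarith
      have hcs := CS f g
      have hbn : b ≤ ‖⟪S₁ f, g⟫_ℂ‖ := Complex.re_le_norm _
      have hnorm_symm : ‖⟪S₁ g, f⟫_ℂ‖ = ‖⟪S₁ f, g⟫_ℂ‖ := by
        rw [hS1_symm g f, ← inner_conj_symm (S₁ f) g, RCLike.norm_conj]
      rw [hnorm_symm] at hcs
      -- b^2 ≤ ‖⟪S₁f,g⟫‖^2 ≤ a * re⟪S₁ g, g⟫ ≤ a * b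
      have hd_nonneg : 0 ≤ (⟪S₁ g, g⟫_ℂ).re := hS1_pos g
      nlinarith [hcs, hbn, hd_le, ha_nonneg, hb_nonneg, hd_nonneg, norm_nonneg (⟪S₁ f, g⟫_ℂ)]
  refine ⟨fun f => (key f).1, fun f => ?_⟩
  have := (key f).2
  simp only [ContinuousLinearMap.sub_apply, inner_sub_left, Complex.sub_re]
  linarith
end

section
/- If S is a bounded, self-adjoint, positive definite invertible operator on a Hilbert space H, and S₁, S₂ are bounded, self-adjoint, positive semidefinite operators with S = S₁ + S₂, then S₂ + S₁ S⁻¹ S₁ ≤ S. -/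
open scoped InnerProductSpace ComplexConjugate

theorem stmt1 {H : Type*} [NormedAddCommGroup H] [InnerProductSpace ℂ H] [CompleteSpace H]
    (S Sinv S₁ S₂ : H →L[ℂ] H)
    (hS_sa : IsSelfAdjoint S) (hS1_sa : IsSelfAdjoint S₁) (hS2_sa : IsSelfAdjoint S₂)
    (hS_pd : ∃ c > 0, ∀ f : H, c * ‖f‖ ^ 2 ≤ (⟪S f, f⟫_ℂ).re)
    (hinv1 : S.comp Sinv = ContinuousLinearMap.id ℂ H)
    (hinv2 : Sinv.comp S = ContinuousLinearMap.id ℂ H)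
    (hS1_pos : ∀ f : H, 0 ≤ (⟪S₁ f, f⟫_ℂ).re) (hS2_pos : ∀ f : H, 0 ≤ (⟪S₂ f, f⟫_ℂ).re)
    (hsum : S = S₁ + S₂) :
    (∀ f : H, 0 ≤ (⟪((S) - (S₂ + S₁.comp (Sinv.comp S₁))) f, f⟫_ℂ).re) := by
  have hsa : ∀ (T : H →L[ℂ] H), IsSelfAdjoint T → ∀ x y : H, ⟪T x, y⟫_ℂ = ⟪x, T y⟫_ℂ := by
    intro T hT x y
    rw [← hT.adjoint_eq, ContinuousLinearMap.adjoint_inner_left, hT.adjoint_eq]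
  intro f
  set u := Sinv (S₁ f) with hu
  have hSu : S u = S₁ f := by
    have := congrArg (fun T : H →L[ℂ] H => T (S₁ f)) hinv1
    simpa using this
  -- key positivity at f - u
  have key : 0 ≤ (⟪S₁ (f - u), f - u⟫_ℂ).re := hS1_pos _
  have hS2u : 0 ≤ (⟪S₂ u, u⟫_ℂ).re := hS2_pos u
  -- notation
  have hb : (⟪S₁ u, f⟫_ℂ).re = (⟪S₁ f, u⟫_ℂ).re := by
    rw [hsa S₁ hS1_sa u f, ← inner_conj_symm, Complex.conj_re]
  -- Re ⟪S₁ u, u⟫ + Re ⟪S₂ u, u⟫ = Re ⟪S₁ f, u⟫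
  have hc : (⟪S₁ u, u⟫_ℂ).re + (⟪S₂ u, u⟫_ℂ).re = (⟪S₁ f, u⟫_ℂ).re := by
    have : ⟪S₁ u, u⟫_ℂ + ⟪S₂ u, u⟫_ℂ = ⟪S₁ f, u⟫_ℂ := by
      rw [← inner_add_left, ← hSu, hsum]; simp [inner_add_left]
    have := congrArg Complex.re this
    simpa using this
  have keyexp : (⟪S₁ (f - u), f - u⟫_ℂ).re
      = (⟪S₁ f, f⟫_ℂ).re - (⟪S₁ f, u⟫_ℂ).re - (⟪S₁ u, f⟫_ℂ).re + (⟪S₁ u, u⟫_ℂ).re := by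
    rw [map_sub, inner_sub_left, inner_sub_right, inner_sub_right]
    simp [Complex.sub_re, Complex.add_re]
    ring
  have htarget : (⟪((S) - (S₂ + S₁.comp (Sinv.comp S₁))) f, f⟫_ℂ).re
      = (⟪S₁ f, f⟫_ℂ).re - (⟪S₁ u, f⟫_ℂ).re := by
    have : ((S) - (S₂ + S₁.comp (Sinv.comp S₁))) f = S₁ f - S₁ u := by
      simp [hsum, ContinuousLinearMap.sub_apply, ContinuousLinearMap.add_apply,
        ContinuousLinearMap.comp_apply, hu]
      abel
    rw [this, inner_sub_left]
    simp [Complex.sub_re]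
  rw [htarget]
  rw [keyexp] at key
  linarith [key, hS2u, hc, hb]
end

section
/- If S is a bounded, self-adjoint, positive definite invertible operator on a Hilbert space H, and S₁, S₂ are bounded, self-adjoint, positive semidefinite operators with S = S₁ + S₂, then S₁ S⁻¹ S₁ + S₂ S⁻¹ S₂ ≤ S. -/
open scoped InnerProductSpace ComplexConjugate

theorem stmt2 {H : Type*} [NormedAddCommGroup H] [InnerProductSpace ℂ H] [CompleteSpace H]
    (S Sinv S₁ S₂ : H →L[ℂ] H)
    (hS_sa : IsSelfAdjoint S) (hS1_sa : IsSelfAdjoint S₁) (hS2_sa : IsSelfAdjoint S₂)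
    (hS_pd : ∃ c > 0, ∀ f : H, c * ‖f‖ ^ 2 ≤ (⟪S f, f⟫_ℂ).re)
    (hinv1 : S.comp Sinv = ContinuousLinearMap.id ℂ H)
    (hinv2 : Sinv.comp S = ContinuousLinearMap.id ℂ H)
    (hS1_pos : ∀ f : H, 0 ≤ (⟪S₁ f, f⟫_ℂ).re) (hS2_pos : ∀ f : H, 0 ≤ (⟪S₂ f, f⟫_ℂ).re)
    (hsum : S = S₁ + S₂) :
    (∀ f : H, 0 ≤ (⟪((S) - (S₁.comp (Sinv.comp S₁) + S₂.comp (Sinv.comp S₂))) f, f⟫_ℂ).re) := by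
  intro f
  set a := Sinv (S₁ f) with ha
  set b := Sinv (S₂ f) with hb
  have hS1f : S a = S₁ f := by
    have := congrArg (fun T : H →L[ℂ] H => T (S₁ f)) hinv1
    simpa [ha] using this
  have hab : a + b = f := by
    have h1 : a + b = Sinv (S f) := by
      rw [ha, hb, ← map_add]
      congr 1
      rw [hsum]; rfl
    have h2 : Sinv (S f) = f := by
      have := congrArg (fun T : H →L[ℂ] H => T f) hinv2
      simpa using this
    rw [h1, h2]
  have hg : S₂ a = S₁ b := by
    have h1 : S a = S₁ a + S₂ a := by rw [hsum]; rfl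
    have h2 : S₁ f = S₁ a + S₁ b := by rw [← hab, map_add]
    have h3 : S₁ a + S₂ a = S₁ a + S₁ b := by rw [← h1, hS1f, h2]
    exact add_left_cancel h3
  have hDf : ((S) - (S₁.comp (Sinv.comp S₁) + S₂.comp (Sinv.comp S₂))) f
      = S₂ a + S₁ b := by
    simp only [ContinuousLinearMap.sub_apply, ContinuousLinearMap.add_apply,
      ContinuousLinearMap.comp_apply]
    have hSf : S f = (S₁ a + S₁ b) + (S₂ a + S₂ b) := by
      rw [← hab, map_add, hsum]
      simp only [ContinuousLinearMap.add_apply]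
      abel
    rw [hSf, ← ha, ← hb]
    abel
  rw [hDf]
  rw [show f = a + b from hab.symm] -- replace f on the right
  rw [inner_add_left, inner_add_right, inner_add_right]
  simp only [Complex.add_re]
  have e1 : (⟪S₂ a, b⟫_ℂ) = ⟪S₁ b, b⟫_ℂ := by rw [hg]
  have e2 : (⟪S₁ b, a⟫_ℂ) = ⟪S₂ a, a⟫_ℂ := by rw [hg]
  rw [e1, e2]
  have h1 := hS1_pos b
  have h2 := hS2_pos a
  linarith
end

section
/- Let S be bounded, self-adjoint, positive definite and invertible, and S₁, S₂ bounded, self-adjoint, positive semidefinite with S = S₁ + S₂. If p, q ∈ ℝ satisfy a² − a(1 + p) + q + p ≥ 0 for all a ∈ [0,1], then S₁ − S₁ S⁻¹ S₁ ≤ p·S₂ + q·S. -/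
open scoped InnerProductSpace ComplexConjugate

theorem stmt5 {H : Type*} [NormedAddCommGroup H] [InnerProductSpace ℂ H] [CompleteSpace H]
    (S Sinv S₁ S₂ : H →L[ℂ] H)
    (hS_sa : IsSelfAdjoint S) (hS1_sa : IsSelfAdjoint S₁) (hS2_sa : IsSelfAdjoint S₂)
    (hS_pd : ∃ c > 0, ∀ f : H, c * ‖f‖ ^ 2 ≤ (⟪S f, f⟫_ℂ).re)
    (hinv1 : S.comp Sinv = ContinuousLinearMap.id ℂ H)
    (hinv2 : Sinv.comp S = ContinuousLinearMap.id ℂ H)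
    (hS1_pos : ∀ f : H, 0 ≤ (⟪S₁ f, f⟫_ℂ).re) (hS2_pos : ∀ f : H, 0 ≤ (⟪S₂ f, f⟫_ℂ).re)
    (hsum : S = S₁ + S₂)
    (p q : ℝ) (hpq : ∀ a ∈ Set.Icc (0:ℝ) 1, 0 ≤ a ^ 2 - a * (1 + p) + q + p) :
    (∀ f : H, 0 ≤ (⟪(((p : ℂ) • S₂ + (q : ℂ) • S) - (S₁ - S₁.comp (Sinv.comp S₁))) f, f⟫_ℂ).re) := by
  obtain ⟨c, hc, hpd⟩ := hS_pd
  have hadj : ∀ (A : H →L[ℂ] H), IsSelfAdjoint A → ∀ u v : H, ⟪A u, v⟫_ℂ = ⟪u, A v⟫_ℂ := by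
    intro A hA u v
    rw [← ContinuousLinearMap.adjoint_inner_left, hA.adjoint_eq]
  intro f
  set g := Sinv (S₁ f) with hg
  have hSg : S g = S₁ f := by
    have := congrArg (fun T => T (S₁ f)) hinv1
    simpa using this
  set x : ℝ := (⟪S f, f⟫_ℂ).re with hx
  set y : ℝ := (⟪S₁ f, f⟫_ℂ).re with hy
  set z : ℝ := (⟪S g, g⟫_ℂ).re with hz
  -- basic positivity
  have hy0 : 0 ≤ y := hS1_pos f
  have hyx : y ≤ x := by
    have h2 := hS2_pos f
    have : x = y + (⟪S₂ f, f⟫_ℂ).re := by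
      rw [hx, hy, hsum]; simp [inner_add_left]
    linarith
  have hz0 : 0 ≤ z := le_trans (by positivity) (hpd g)
  -- cross terms
  have hcross1 : (⟪S g, f⟫_ℂ).re = y := by rw [hSg]
  have hcross2 : (⟪S f, g⟫_ℂ).re = y := by
    rw [hadj S hS_sa f g, ← inner_conj_symm, hSg, Complex.conj_re]
  -- Cauchy-Schwarz for the S-form
  have hquad : ∀ t : ℝ, 0 ≤ z * (t * t) + (-(2 * y)) * t + x := by
    intro t
    have h0 : (0:ℝ) ≤ (⟪S (f - (t:ℂ) • g), f - (t:ℂ) • g⟫_ℂ).re :=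
      le_trans (by positivity) (hpd _)
    have hexp : (⟪S (f - (t:ℂ) • g), f - (t:ℂ) • g⟫_ℂ)
        = ⟪S f, f⟫_ℂ - (t:ℂ) * ⟪S g, f⟫_ℂ - (t:ℂ) * ⟪S f, g⟫_ℂ
          + ((t * t : ℝ) : ℂ) * ⟪S g, g⟫_ℂ := by
      rw [map_sub, map_smul]
      rw [inner_sub_left, inner_sub_right, inner_sub_right, inner_smul_left,
        inner_smul_left, inner_smul_right, inner_smul_right, Complex.conj_ofReal]
      push_cast
      ring
    rw [hexp] at h0
    simp only [Complex.sub_re, Complex.add_re, Complex.re_ofReal_mul,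
      hcross1, hcross2, ← hx, ← hz] at h0
    nlinarith [h0]
  have hcs : y ^ 2 ≤ x * z := by
    have := discrim_le_zero hquad
    rw [discrim] at this
    nlinarith [this]
  -- compute the target inner product
  have hS1g : (⟪S₁ g, f⟫_ℂ).re = z := by
    rw [hadj S₁ hS1_sa g f, ← hSg, ← hadj S hS_sa g g]
  have hmain : (⟪(((p : ℂ) • S₂ + (q : ℂ) • S) - (S₁ - S₁.comp (Sinv.comp S₁))) f, f⟫_ℂ).re
      = p * (x - y) + q * x - y + z := by
    have hx2 : (⟪S₂ f, f⟫_ℂ).re = x - y := by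
      have : x = y + (⟪S₂ f, f⟫_ℂ).re := by
        rw [hx, hy, hsum]; simp [inner_add_left]
      linarith
    simp only [ContinuousLinearMap.sub_apply, ContinuousLinearMap.add_apply,
      ContinuousLinearMap.smul_apply, ContinuousLinearMap.comp_apply,
      inner_sub_left, inner_add_left, inner_smul_left]
    rw [← hg] at *
    simp [Complex.sub_re, Complex.add_re, Complex.mul_re, hx2, hS1g, hy]
    ring
  rw [hmain]
  -- final scalar argument
  rcases eq_or_lt_of_le (le_trans hy0 hyx) with hx0 | hx0
  · have hyzero : y = 0 := le_antisymm (hx0 ▸ hyx) hy0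
    rw [← hx0, hyzero]; linarith
  · have ha : y / x ∈ Set.Icc (0:ℝ) 1 :=
      ⟨div_nonneg hy0 hx0.le, (div_le_one hx0).mpr hyx⟩
    have h := hpq (y / x) ha
    have h3 : 0 ≤ y ^ 2 - y * x * (1 + p) + (q + p) * x ^ 2 := by
      have heq : ((y / x) ^ 2 - (y / x) * (1 + p) + q + p) * x ^ 2
          = y ^ 2 - y * x * (1 + p) + (q + p) * x ^ 2 := by
        field_simp
        ring
      nlinarith [mul_nonneg h (sq_nonneg x)]
    nlinarith [h3, hcs, hx0, mul_pos hx0 hx0]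
end

section
/- Let S be bounded, self-adjoint, positive definite and invertible, and S₁, S₂ bounded, self-adjoint, positive semidefinite with S = S₁ + S₂. If p, q ∈ ℝ satisfy a² + a((q − p)/2 − 1) + (1 − q)/2 ≥ 0 for all a ∈ [0,1], then p·S₁ + q·S₂ ≤ S₁ S⁻¹ S₁ + S₂ S⁻¹ S₂. -/
open scoped InnerProductSpace ComplexConjugate

lemma aux_cs {H : Type*} [NormedAddCommGroup H] [InnerProductSpace ℂ H] [CompleteSpace H]
    (S Sinv T : H →L[ℂ] H)
    (hS_sa : IsSelfAdjoint S)
    (hinv1 : S.comp Sinv = ContinuousLinearMap.id ℂ H)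
    (hinv2 : Sinv.comp S = ContinuousLinearMap.id ℂ H)
    (hpos : ∀ w : H, 0 ≤ (⟪S w, w⟫_ℂ).re)
    (f : H) (hs : 0 < (⟪S f, f⟫_ℂ).re) :
    (⟪T f, f⟫_ℂ).re ^ 2 ≤ (⟪Sinv (T f), T f⟫_ℂ).re * (⟪S f, f⟫_ℂ).re := by
  have hsym : ∀ x y : H, ⟪S x, y⟫_ℂ = ⟪x, S y⟫_ℂ := fun x y => hS_sa.isSymmetric x y
  have hSinvS : ∀ w : H, S (Sinv w) = w := by
    intro w
    have := ContinuousLinearMap.ext_iff.1 hinv1 w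
    simpa using this
  have hSSinv : ∀ w : H, Sinv (S w) = w := by
    intro w
    have := ContinuousLinearMap.ext_iff.1 hinv2 w
    simpa using this
  have hSinv_pos : ∀ w : H, 0 ≤ (⟪Sinv w, w⟫_ℂ).re := by
    intro w
    set g := Sinv w with hg
    have hw : w = S g := (hSinvS w).symm
    rw [hw, ← hsym]
    exact hpos g
  set X := (⟪T f, f⟫_ℂ).re with hX
  set Y := (⟪Sinv (T f), T f⟫_ℂ).re with hY
  set s := (⟪S f, f⟫_ℂ).re with hsdef
  have key : ∀ t : ℝ, 0 ≤ Y + 2 * t * X + t ^ 2 * s := by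
    intro t
    have h0 := hSinv_pos (T f + (t : ℂ) • S f)
    have e1 : ⟪Sinv (T f), S f⟫_ℂ = ⟪T f, f⟫_ℂ := by
      rw [← hsym, hSinvS]
    have e2 : ⟪Sinv (S f), T f⟫_ℂ = ⟪f, T f⟫_ℂ := by rw [hSSinv]
    have e3 : ⟪Sinv (S f), S f⟫_ℂ = ⟪f, S f⟫_ℂ := by rw [hSSinv]
    have e4 : ⟪f, T f⟫_ℂ = conj ⟪T f, f⟫_ℂ := (inner_conj_symm _ _).symm
    have e5 : ⟪f, S f⟫_ℂ = conj ⟪S f, f⟫_ℂ := (inner_conj_symm _ _).symm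
    have expand : (⟪Sinv (T f + (t : ℂ) • S f), T f + (t : ℂ) • S f⟫_ℂ).re
        = Y + 2 * t * X + t ^ 2 * s := by
      rw [map_add, map_smul, inner_add_left, inner_add_right, inner_add_right,
        inner_smul_left, inner_smul_right, inner_smul_left, inner_smul_right,
        e1, e2, e3, e4, e5]
      simp only [Complex.add_re, Complex.mul_re, Complex.conj_re, Complex.conj_im,
        Complex.conj_ofReal, Complex.ofReal_re, Complex.ofReal_im, hX, hY, hsdef]
      ring
    rw [expand] at h0
    exact h0
  have h := key (-(X / s))
  have hs' : s ≠ 0 := ne_of_gt hs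
  have hid : Y + 2 * (-(X / s)) * X + (-(X / s)) ^ 2 * s = Y - X ^ 2 / s := by
    field_simp
    ring
  rw [hid] at h
  have : X ^ 2 / s ≤ Y := by linarith
  calc X ^ 2 = X ^ 2 / s * s := by field_simp
    _ ≤ Y * s := by nlinarith

theorem stmt6 {H : Type*} [NormedAddCommGroup H] [InnerProductSpace ℂ H] [CompleteSpace H]
    (S Sinv S₁ S₂ : H →L[ℂ] H)
    (hS_sa : IsSelfAdjoint S) (hS1_sa : IsSelfAdjoint S₁) (hS2_sa : IsSelfAdjoint S₂)
    (hS_pd : ∃ c > 0, ∀ f : H, c * ‖f‖ ^ 2 ≤ (⟪S f, f⟫_ℂ).re)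
    (hinv1 : S.comp Sinv = ContinuousLinearMap.id ℂ H)
    (hinv2 : Sinv.comp S = ContinuousLinearMap.id ℂ H)
    (hS1_pos : ∀ f : H, 0 ≤ (⟪S₁ f, f⟫_ℂ).re) (hS2_pos : ∀ f : H, 0 ≤ (⟪S₂ f, f⟫_ℂ).re)
    (hsum : S = S₁ + S₂)
    (p q : ℝ) (hpq : ∀ a ∈ Set.Icc (0:ℝ) 1, 0 ≤ a ^ 2 + a * ((q - p) / 2 - 1) + (1 - q) / 2) :
    (∀ f : H, 0 ≤ (⟪((S₁.comp (Sinv.comp S₁) + S₂.comp (Sinv.comp S₂)) - ((p : ℂ) • S₁ + (q : ℂ) • S₂)) f, f⟫_ℂ).re) := by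
  obtain ⟨c, hc, hcf⟩ := hS_pd
  have hpos : ∀ w : H, 0 ≤ (⟪S w, w⟫_ℂ).re := by
    intro w
    have := hcf w
    nlinarith [norm_nonneg w, sq_nonneg ‖w‖]
  intro f
  by_cases hf : f = 0
  · simp [hf]
  · have hs : 0 < (⟪S f, f⟫_ℂ).re := by
      have h := hcf f
      have hnf : 0 < ‖f‖ := norm_pos_iff.mpr hf
      exact lt_of_lt_of_le (mul_pos hc (pow_pos hnf 2)) h
    set X := (⟪S₁ f, f⟫_ℂ).re with hXdef
    set W := (⟪S₂ f, f⟫_ℂ).re with hWdef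
    set s := (⟪S f, f⟫_ℂ).re with hsdef
    have hsXW : s = X + W := by
      rw [hsdef, hsum]
      simp [inner_add_left]
      rfl
    have hX : 0 ≤ X := hS1_pos f
    have hW : 0 ≤ W := hS2_pos f
    set Y₁ := (⟪Sinv (S₁ f), S₁ f⟫_ℂ).re with hY1
    set Y₂ := (⟪Sinv (S₂ f), S₂ f⟫_ℂ).re with hY2
    have hCS1 : X ^ 2 ≤ Y₁ * s := aux_cs S Sinv S₁ hS_sa hinv1 hinv2 hpos f hs
    have hCS2 : W ^ 2 ≤ Y₂ * s := aux_cs S Sinv S₂ hS_sa hinv1 hinv2 hpos f hs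
    have hadj1 : ContinuousLinearMap.adjoint S₁ = S₁ := hS1_sa
    have hadj2 : ContinuousLinearMap.adjoint S₂ = S₂ := hS2_sa
    have eLHS : (⟪((S₁.comp (Sinv.comp S₁) + S₂.comp (Sinv.comp S₂)) - ((p : ℂ) • S₁ + (q : ℂ) • S₂)) f, f⟫_ℂ).re
        = Y₁ + Y₂ - (p * X + q * W) := by
      have c1 : ⟪S₁ (Sinv (S₁ f)), f⟫_ℂ = ⟪Sinv (S₁ f), S₁ f⟫_ℂ := by
        rw [← hadj1, ContinuousLinearMap.adjoint_inner_left, hadj1]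
      have c2 : ⟪S₂ (Sinv (S₂ f)), f⟫_ℂ = ⟪Sinv (S₂ f), S₂ f⟫_ℂ := by
        rw [← hadj2, ContinuousLinearMap.adjoint_inner_left, hadj2]
      simp only [ContinuousLinearMap.sub_apply, ContinuousLinearMap.add_apply,
        ContinuousLinearMap.comp_apply, ContinuousLinearMap.smul_apply,
        inner_sub_left, inner_add_left, inner_smul_left, c1, c2]
      simp [Complex.mul_re, hY1, hY2, hXdef, hWdef]
    rw [eLHS]
    have ha : X / s ∈ Set.Icc (0:ℝ) 1 := by
      constructor
      · exact div_nonneg hX hs.le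
      · rw [div_le_one hs]; linarith
    have hq := hpq (X / s) ha
    have hq' : 0 ≤ 2 * X ^ 2 + X * ((q - p) - 2) * s + (1 - q) * s ^ 2 := by
      have h2 : 0 ≤ ((X / s) ^ 2 + (X / s) * ((q - p) / 2 - 1) + (1 - q) / 2) * (2 * s ^ 2) :=
        mul_nonneg hq (by positivity)
      have hid : ((X / s) ^ 2 + (X / s) * ((q - p) / 2 - 1) + (1 - q) / 2) * (2 * s ^ 2)
          = 2 * X ^ 2 + X * ((q - p) - 2) * s + (1 - q) * s ^ 2 := by
        field_simp
      linarith [hid ▸ h2]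
    have hWs : W = s - X := by linarith
    rw [hWs] at hCS2 ⊢
    have key : 0 ≤ s * (Y₁ + Y₂ - (p * X + q * (s - X))) := by nlinarith [hCS1, hCS2, hq']
    nlinarith [key, hs]
end

section
/- Let S be bounded, self-adjoint, positive definite and invertible, and S₁, S₂ bounded, self-adjoint, positive semidefinite with S = S₁ + S₂. Then for any λ ∈ ℝ, (λ − λ²/4)·S₁ + (1 − λ²/4)·S₂ ≤ S₂ + S₁ S⁻¹ S₁ ≤ S. -/
open scoped InnerProductSpace ComplexConjugate

lemma sa_symm {H : Type*} [NormedAddCommGroup H] [InnerProductSpace ℂ H] [CompleteSpace H]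
    (A : H →L[ℂ] H) (hA : IsSelfAdjoint A) (x y : H) :
    (⟪A x, y⟫_ℂ).re = (⟪A y, x⟫_ℂ).re := by
  have h : ⟪A x, y⟫_ℂ = ⟪x, A y⟫_ℂ := hA.isSymmetric x y
  rw [h, ← inner_conj_symm, Complex.conj_re]

lemma expand_sub_smul {H : Type*} [NormedAddCommGroup H] [InnerProductSpace ℂ H]
    [CompleteSpace H] (A : H →L[ℂ] H) (hA : IsSelfAdjoint A) (x y : H) (t : ℝ) :
    (⟪A (x - (t:ℂ) • y), x - (t:ℂ) • y⟫_ℂ).re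
      = (⟪A x, x⟫_ℂ).re - 2*t*(⟪A x, y⟫_ℂ).re + t^2*(⟪A y, y⟫_ℂ).re := by
  have hsymm := sa_symm A hA y x
  simp only [map_sub, map_smul, inner_sub_left, inner_sub_right, inner_smul_left,
    inner_smul_right, Complex.sub_re, Complex.mul_re, Complex.conj_re, Complex.conj_im,
    Complex.ofReal_re, Complex.ofReal_im, Complex.conj_ofReal]
  rw [hsymm]
  ring

lemma expand_sub {H : Type*} [NormedAddCommGroup H] [InnerProductSpace ℂ H]
    [CompleteSpace H] (A : H →L[ℂ] H) (hA : IsSelfAdjoint A) (x y : H) :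
    (⟪A (x - y), x - y⟫_ℂ).re
      = (⟪A x, x⟫_ℂ).re - 2*(⟪A x, y⟫_ℂ).re + (⟪A y, y⟫_ℂ).re := by
  have := expand_sub_smul A hA x y 1
  simpa using this

theorem stmt7 {H : Type*} [NormedAddCommGroup H] [InnerProductSpace ℂ H] [CompleteSpace H]
    (S Sinv S₁ S₂ : H →L[ℂ] H)
    (hS_sa : IsSelfAdjoint S) (hS1_sa : IsSelfAdjoint S₁) (hS2_sa : IsSelfAdjoint S₂)
    (hS_pd : ∃ c > 0, ∀ f : H, c * ‖f‖ ^ 2 ≤ (⟪S f, f⟫_ℂ).re)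
    (hinv1 : S.comp Sinv = ContinuousLinearMap.id ℂ H)
    (hinv2 : Sinv.comp S = ContinuousLinearMap.id ℂ H)
    (hS1_pos : ∀ f : H, 0 ≤ (⟪S₁ f, f⟫_ℂ).re) (hS2_pos : ∀ f : H, 0 ≤ (⟪S₂ f, f⟫_ℂ).re)
    (hsum : S = S₁ + S₂) (l : ℝ) :
    (∀ f : H, 0 ≤ (⟪((S₂ + S₁.comp (Sinv.comp S₁)) - (((l - l ^ 2 / 4 : ℝ) : ℂ) • S₁ + ((1 - l ^ 2 / 4 : ℝ) : ℂ) • S₂)) f, f⟫_ℂ).re) ∧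
    (∀ f : H, 0 ≤ (⟪((S) - (S₂ + S₁.comp (Sinv.comp S₁))) f, f⟫_ℂ).re) := by
  obtain ⟨c, hc, hS⟩ := hS_pd
  have hSpos : ∀ f : H, 0 ≤ (⟪S f, f⟫_ℂ).re := fun f =>
    le_trans (by positivity) (hS f)
  constructor
  · intro f
    set g := Sinv (S₁ f) with hgdef
    have hg : S g = S₁ f := by
      have := ContinuousLinearMap.ext_iff.mp hinv1 (S₁ f)
      simpa [ContinuousLinearMap.comp_apply] using this
    have key1 : (⟪S₁ g, f⟫_ℂ).re = (⟪S g, g⟫_ℂ).re := by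
      rw [sa_symm S₁ hS1_sa g f, ← hg]
    have hSgf : (⟪S g, f⟫_ℂ).re = (⟪S₁ f, f⟫_ℂ).re := by rw [hg]
    have hSff : (⟪S f, f⟫_ℂ).re = (⟪S₁ f, f⟫_ℂ).re + (⟪S₂ f, f⟫_ℂ).re := by
      rw [hsum]
      simp [ContinuousLinearMap.add_apply, inner_add_left]
    have h0 : (0:ℝ) ≤ (⟪S g, g⟫_ℂ).re - 2*(l/2)*(⟪S g, f⟫_ℂ).re + (l/2)^2*(⟪S f, f⟫_ℂ).re := by
      rw [← expand_sub_smul S hS_sa g f (l/2)]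
      exact hSpos _
    rw [hSgf, hSff] at h0
    simp only [ContinuousLinearMap.sub_apply, ContinuousLinearMap.add_apply,
      ContinuousLinearMap.comp_apply, ContinuousLinearMap.smul_apply, inner_sub_left,
      inner_add_left, inner_smul_left, Complex.sub_re, Complex.add_re, Complex.mul_re,
      Complex.conj_ofReal, Complex.ofReal_re, Complex.ofReal_im]
    rw [← hgdef, key1]
    nlinarith [h0]
  · intro f
    set g := Sinv (S₁ f) with hgdef
    have hg : S g = S₁ f := by
      have := ContinuousLinearMap.ext_iff.mp hinv1 (S₁ f)
      simpa [ContinuousLinearMap.comp_apply] using this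
    have key1 : (⟪S₁ g, f⟫_ℂ).re = (⟪S g, g⟫_ℂ).re := by
      rw [sa_symm S₁ hS1_sa g f, ← hg]
    have hS1fg : (⟪S₁ f, g⟫_ℂ).re = (⟪S g, g⟫_ℂ).re := by rw [← hg]
    have hSff : (⟪S f, f⟫_ℂ).re = (⟪S₁ f, f⟫_ℂ).re + (⟪S₂ f, f⟫_ℂ).re := by
      rw [hsum]; simp [ContinuousLinearMap.add_apply, inner_add_left]
    have hSgg : (⟪S g, g⟫_ℂ).re = (⟪S₁ g, g⟫_ℂ).re + (⟪S₂ g, g⟫_ℂ).re := by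
      rw [hsum]; simp [ContinuousLinearMap.add_apply, inner_add_left]
    have h1 : (0:ℝ) ≤ (⟪S₁ f, f⟫_ℂ).re - 2*(⟪S₁ f, g⟫_ℂ).re + (⟪S₁ g, g⟫_ℂ).re := by
      rw [← expand_sub S₁ hS1_sa f g]
      exact hS1_pos _
    have h2 := hS2_pos g
    rw [hS1fg] at h1
    simp only [ContinuousLinearMap.sub_apply, ContinuousLinearMap.add_apply,
      ContinuousLinearMap.comp_apply, inner_sub_left, inner_add_left,
      Complex.sub_re, Complex.add_re]
    rw [← hgdef, key1, hSff]
    linarith [hSgg, h1, h2]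
end

section
/- Let S be bounded, self-adjoint, positive definite and invertible, and S₁, S₂ bounded, self-adjoint, positive semidefinite with S = S₁ + S₂. Then for any λ ∈ ℝ, 0 ≤ S₁ − S₁ S⁻¹ S₁ ≤ (λ − 1)·S₂ + (1 − λ/2)²·S. -/
open scoped InnerProductSpace ComplexConjugate

theorem stmt8 {H : Type*} [NormedAddCommGroup H] [InnerProductSpace ℂ H] [CompleteSpace H]
    (S Sinv S₁ S₂ : H →L[ℂ] H)
    (hS_sa : IsSelfAdjoint S) (hS1_sa : IsSelfAdjoint S₁) (hS2_sa : IsSelfAdjoint S₂)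
    (hS_pd : ∃ c > 0, ∀ f : H, c * ‖f‖ ^ 2 ≤ (⟪S f, f⟫_ℂ).re)
    (hinv1 : S.comp Sinv = ContinuousLinearMap.id ℂ H)
    (hinv2 : Sinv.comp S = ContinuousLinearMap.id ℂ H)
    (hS1_pos : ∀ f : H, 0 ≤ (⟪S₁ f, f⟫_ℂ).re) (hS2_pos : ∀ f : H, 0 ≤ (⟪S₂ f, f⟫_ℂ).re)
    (hsum : S = S₁ + S₂) (l : ℝ) :
    (∀ f : H, 0 ≤ (⟪(S₁ - (S₁.comp (Sinv.comp S₁))) f, f⟫_ℂ).re) ∧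
    (∀ f : H, 0 ≤ (⟪((((l - 1 : ℝ) : ℂ) • S₂ + (((1 - l / 2) ^ 2 : ℝ) : ℂ) • S) - (S₁ - (S₁.comp (Sinv.comp S₁)))) f, f⟫_ℂ).re) := by
  have hsymS : ∀ x y : H, ⟪S x, y⟫_ℂ = ⟪x, S y⟫_ℂ := fun x y => hS_sa.isSymmetric x y
  have hsymS1 : ∀ x y : H, ⟪S₁ x, y⟫_ℂ = ⟪x, S₁ y⟫_ℂ := fun x y => hS1_sa.isSymmetric x y
  have hSpos : ∀ h : H, 0 ≤ (⟪S h, h⟫_ℂ).re := by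
    obtain ⟨c, hc, hcle⟩ := hS_pd
    intro h
    have := hcle h
    nlinarith [sq_nonneg ‖h‖]
  -- main pointwise computations
  have main : ∀ f : H,
      0 ≤ (⟪S₁ f, f⟫_ℂ).re - (⟪(S₁.comp (Sinv.comp S₁)) f, f⟫_ℂ).re ∧
      0 ≤ ((l - 1) * (⟪S₂ f, f⟫_ℂ).re + (1 - l / 2) ^ 2 * (⟪S f, f⟫_ℂ).re)
            - ((⟪S₁ f, f⟫_ℂ).re - (⟪(S₁.comp (Sinv.comp S₁)) f, f⟫_ℂ).re) := by
    intro f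
    set g : H := Sinv (S₁ f) with hg
    have hSg : S g = S₁ f := by
      have : (S.comp Sinv) (S₁ f) = S₁ f := by rw [hinv1]; rfl
      simpa [ContinuousLinearMap.comp_apply] using this
    have hcomp : (S₁.comp (Sinv.comp S₁)) f = S₁ g := by
      simp [ContinuousLinearMap.comp_apply, hg]
    set a : ℝ := (⟪S f, f⟫_ℂ).re
    set b : ℝ := (⟪S₁ f, f⟫_ℂ).re
    set cc : ℝ := (⟪S₂ f, f⟫_ℂ).re
    set d : ℝ := (⟪S g, g⟫_ℂ).re
    -- Re⟪S₁ g, f⟫ = d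
    have hT : (⟪S₁ g, f⟫_ℂ).re = d := by
      rw [hsymS1 g (f : H)]
      rw [← hSg, ← hsymS g g]
    -- Re⟪S₁ f, g⟫ = d
    have hT2 : (⟪S₁ f, g⟫_ℂ).re = d := by
      rw [← hSg]
    -- Re⟪S g, f⟫ = b
    have hU : (⟪S g, f⟫_ℂ).re = b := by rw [hSg]
    -- Re⟪S f, g⟫ = b
    have hU2 : (⟪S f, g⟫_ℂ).re = b := by
      rw [hsymS f g, hSg, ← hsymS1 f f]
    -- a = b + cc
    have habc : a = b + cc := by
      simp only [a, b, cc, hsum, ContinuousLinearMap.add_apply, inner_add_left, Complex.add_re]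
    -- d = Re⟪S₁ g, g⟫ + Re⟪S₂ g, g⟫
    have hd : d = (⟪S₁ g, g⟫_ℂ).re + (⟪S₂ g, g⟫_ℂ).re := by
      simp only [d, hsum, ContinuousLinearMap.add_apply, inner_add_left, Complex.add_re]
    -- part 1 inequality
    have h1 : 0 ≤ b - d := by
      have hA := hS1_pos (f - g)
      have hB := hS2_pos g
      have hexp : (⟪S₁ (f - g), f - g⟫_ℂ).re
          = b - d - d + (⟪S₁ g, g⟫_ℂ).re := by
        simp only [map_sub, inner_sub_left, inner_sub_right, Complex.sub_re]
        rw [hT, hT2]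
        simp only [b, d]; ring
      rw [hexp] at hA
      linarith
    -- part 2 inequality
    have h2 : 0 ≤ d - l * b + (l / 2) ^ 2 * a := by
      have hC := hSpos (g - ((l / 2 : ℝ) : ℂ) • f)
      have hexp : (⟪S (g - ((l / 2 : ℝ) : ℂ) • f), g - ((l / 2 : ℝ) : ℂ) • f⟫_ℂ).re
          = d - (l / 2) * b - (l / 2) * b + (l / 2) ^ 2 * a := by
        simp only [map_sub, map_smul, inner_sub_left, inner_sub_right, inner_smul_left,
          inner_smul_right, Complex.sub_re, Complex.mul_re, Complex.conj_ofReal,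
          Complex.ofReal_re, Complex.ofReal_im]
        rw [hU, hU2]
        simp only [a, b, d]; ring
      rw [hexp] at hC
      nlinarith
    constructor
    · rw [hcomp, hT]; exact h1
    · rw [hcomp, hT]
      have : cc = a - b := by linarith
      rw [this]
      nlinarith [h2]
  constructor
  · intro f
    have h := (main f).1
    simpa [ContinuousLinearMap.sub_apply, inner_sub_left, Complex.sub_re] using h
  · intro f
    have h := (main f).2
    have hexp : (⟪((((l - 1 : ℝ) : ℂ) • S₂ + (((1 - l / 2) ^ 2 : ℝ) : ℂ) • S)
          - (S₁ - (S₁.comp (Sinv.comp S₁)))) f, f⟫_ℂ).re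
        = ((l - 1) * (⟪S₂ f, f⟫_ℂ).re + (1 - l / 2) ^ 2 * (⟪S f, f⟫_ℂ).re)
            - ((⟪S₁ f, f⟫_ℂ).re - (⟪(S₁.comp (Sinv.comp S₁)) f, f⟫_ℂ).re) := by
      simp only [ContinuousLinearMap.sub_apply, ContinuousLinearMap.add_apply,
        ContinuousLinearMap.smul_apply, inner_sub_left, inner_add_left, inner_smul_left,
        Complex.sub_re, Complex.add_re, Complex.mul_re, Complex.conj_ofReal,
        Complex.ofReal_re, Complex.ofReal_im]
      ring
    rw [hexp]
    exact h
end

section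
/- Let S be bounded, self-adjoint, positive definite and invertible, and S₁, S₂ bounded, self-adjoint, positive semidefinite with S = S₁ + S₂. Then for any λ ∈ ℝ, (2λ − λ²/2 − 1)·S₁ + (1 − λ²/2)·S₂ ≤ S₁ S⁻¹ S₁ + S₂ S⁻¹ S₂ ≤ S. -/
open scoped InnerProductSpace ComplexConjugate

private lemma re_symm {H : Type*} [NormedAddCommGroup H] [InnerProductSpace ℂ H]
    [CompleteSpace H] (A : H →L[ℂ] H) (hA : IsSelfAdjoint A) (u v : H) :
    (⟪A u, v⟫_ℂ).re = (⟪A v, u⟫_ℂ).re := by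
  have h1 : ⟪A u, v⟫_ℂ = ⟪u, A v⟫_ℂ := hA.isSymmetric u v
  rw [h1, ← inner_conj_symm, Complex.conj_re]

private lemma key_aux {H : Type*} [NormedAddCommGroup H] [InnerProductSpace ℂ H]
    [CompleteSpace H] (S Sinv A B : H →L[ℂ] H)
    (hS_sa : IsSelfAdjoint S) (hA_sa : IsSelfAdjoint A)
    (hinv1 : S.comp Sinv = ContinuousLinearMap.id ℂ H)
    (hA_pos : ∀ f : H, 0 ≤ (⟪A f, f⟫_ℂ).re) (hB_pos : ∀ f : H, 0 ≤ (⟪B f, f⟫_ℂ).re)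
    (hsum : S = A + B) (f : H) :
    0 ≤ (⟪A f, Sinv (A f)⟫_ℂ).re ∧ (⟪A f, Sinv (A f)⟫_ℂ).re ≤ (⟪A f, f⟫_ℂ).re := by
  set x := Sinv (A f) with hx
  have hSx : S x = A f := by
    have := ContinuousLinearMap.ext_iff.mp hinv1 (A f)
    simpa using this
  set p : ℝ := (⟪A f, f⟫_ℂ).re with hp
  set r : ℝ := (⟪A f, x⟫_ℂ).re with hr
  set q : ℝ := (⟪A x, x⟫_ℂ).re with hq
  have hp0 : 0 ≤ p := hA_pos f
  have hq0 : 0 ≤ q := hA_pos x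
  -- r = q + ⟪B x, x⟫.re
  have hrq : r = q + (⟪B x, x⟫_ℂ).re := by
    have : (⟪A f, x⟫_ℂ) = ⟪A x, x⟫_ℂ + ⟪B x, x⟫_ℂ := by
      rw [← hSx, hsum]
      simp [ContinuousLinearMap.add_apply, inner_add_left]
    rw [hr, this, Complex.add_re]
  have hr0 : 0 ≤ r := by
    rw [hrq]; exact add_nonneg hq0 (hB_pos x)
  have hqr : q ≤ r := by
    rw [hrq]; linarith [hB_pos x]
  -- symmetry: re ⟪A x, f⟫ = r
  have hsymr : (⟪A x, f⟫_ℂ).re = r := by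
    rw [re_symm A hA_sa x f, hr]
  -- discriminant
  have hdisc : ∀ t : ℝ, 0 ≤ q * (t * t) + (2 * r) * t + p := by
    intro t
    have h0 := hA_pos (f + (t : ℂ) • x)
    have hexp : (⟪A (f + (t : ℂ) • x), f + (t : ℂ) • x⟫_ℂ).re
        = p + t * r + t * (⟪A x, f⟫_ℂ).re + t * t * q := by
      rw [map_add, map_smul, inner_add_left, inner_add_right, inner_add_right,
        inner_smul_left, inner_smul_right, inner_smul_left, inner_smul_right]
      simp [Complex.add_re, Complex.mul_re, Complex.conj_ofReal, Complex.ofReal_re,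
        Complex.ofReal_im, hp, hr, hq]
      ring
    rw [hexp, hsymr] at h0
    nlinarith [h0]
  have hd := discrim_le_zero hdisc
  rw [discrim] at hd
  -- (2r)^2 - 4*q*p ≤ 0
  have hrsq : r * r ≤ q * p := by nlinarith [hd]
  constructor
  · exact hr0
  · nlinarith [hrsq, hqr, hp0, hr0]

theorem stmt9 {H : Type*} [NormedAddCommGroup H] [InnerProductSpace ℂ H] [CompleteSpace H]
    (S Sinv S₁ S₂ : H →L[ℂ] H)
    (hS_sa : IsSelfAdjoint S) (hS1_sa : IsSelfAdjoint S₁) (hS2_sa : IsSelfAdjoint S₂)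
    (hS_pd : ∃ c > 0, ∀ f : H, c * ‖f‖ ^ 2 ≤ (⟪S f, f⟫_ℂ).re)
    (hinv1 : S.comp Sinv = ContinuousLinearMap.id ℂ H)
    (hinv2 : Sinv.comp S = ContinuousLinearMap.id ℂ H)
    (hS1_pos : ∀ f : H, 0 ≤ (⟪S₁ f, f⟫_ℂ).re) (hS2_pos : ∀ f : H, 0 ≤ (⟪S₂ f, f⟫_ℂ).re)
    (hsum : S = S₁ + S₂) (l : ℝ) :
    (∀ f : H, 0 ≤ (⟪((S₁.comp (Sinv.comp S₁) + S₂.comp (Sinv.comp S₂)) - (((2 * l - l ^ 2 / 2 - 1 : ℝ) : ℂ) • S₁ + ((1 - l ^ 2 / 2 : ℝ) : ℂ) • S₂)) f, f⟫_ℂ).re) ∧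
    (∀ f : H, 0 ≤ (⟪((S) - (S₁.comp (Sinv.comp S₁) + S₂.comp (Sinv.comp S₂))) f, f⟫_ℂ).re) := by
  have hsum' : S = S₂ + S₁ := by rw [hsum, add_comm]
  -- generic per-f setup
  have setup : ∀ f : H,
      (⟪S₁ f, Sinv (S₁ f)⟫_ℂ).re ≤ (⟪S₁ f, f⟫_ℂ).re ∧
      (⟪S₂ f, Sinv (S₂ f)⟫_ℂ).re ≤ (⟪S₂ f, f⟫_ℂ).re := by
    intro f
    exact ⟨(key_aux S Sinv S₁ S₂ hS_sa hS1_sa hinv1 hS1_pos hS2_pos hsum f).2,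
      (key_aux S Sinv S₂ S₁ hS_sa hS2_sa hinv1 hS2_pos hS1_pos hsum' f).2⟩
  constructor
  · -- lower bound
    intro f
    set x := Sinv (S₁ f) with hxdef
    set y := Sinv (S₂ f) with hydef
    have hSx : S x = S₁ f := by
      have := ContinuousLinearMap.ext_iff.mp hinv1 (S₁ f); simpa using this
    have hSf : S f = S₁ f + S₂ f := by rw [hsum]; rfl
    have hxy : x + y = f := by
      have h1 : Sinv (S f) = f := by
        have := ContinuousLinearMap.ext_iff.mp hinv2 f; simpa using this
      rw [hxdef, hydef, ← map_add, ← hSf, h1]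
    set p₁ : ℝ := (⟪S₁ f, f⟫_ℂ).re with hp1
    set p₂ : ℝ := (⟪S₂ f, f⟫_ℂ).re with hp2
    set r₁ : ℝ := (⟪S₁ f, x⟫_ℂ).re with hr1
    set r₂ : ℝ := (⟪S₂ f, y⟫_ℂ).re with hr2
    -- re ⟪S f, x⟫ = p₁
    have hSfx : (⟪S f, x⟫_ℂ).re = p₁ := by
      rw [re_symm S hS_sa f x, hSx]
    have hSxf : (⟪S x, f⟫_ℂ).re = p₁ := by rw [hSx]
    have hSxx : (⟪S x, x⟫_ℂ).re = r₁ := by rw [hSx]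
    have hSff : (⟪S f, f⟫_ℂ).re = p₁ + p₂ := by
      rw [hSf, inner_add_left, Complex.add_re]
    -- relation r₂ = p₂ - p₁ + r₁
    have hrel : r₂ = (p₁ + p₂) - p₁ - p₁ + r₁ := by
      have h1 : S₂ f = S f - S₁ f := by rw [hSf]; abel
      have h2 : y = f - x := by rw [← hxy]; abel
      rw [hr2, h1, h2, inner_sub_left, inner_sub_right, inner_sub_right]
      simp only [Complex.sub_re]
      rw [hSff, hSfx, ← hp1, ← hr1]
      ring
    -- positivity of ⟪S u, u⟫ with u = l • f - 2 • x
    obtain ⟨c, hc, hpd⟩ := hS_pd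
    set u : H := (l : ℂ) • f - (2 : ℂ) • x with hu
    have hupos : 0 ≤ (⟪S u, u⟫_ℂ).re := by
      have := hpd u
      nlinarith [sq_nonneg ‖u‖, norm_nonneg u]
    have huexp : (⟪S u, u⟫_ℂ).re = l * l * (p₁ + p₂) - 4 * l * p₁ + 4 * r₁ := by
      rw [hu, map_sub, map_smul, map_smul, inner_sub_left, inner_sub_right,
        inner_sub_right, inner_smul_left, inner_smul_left, inner_smul_right,
        inner_smul_right, inner_smul_left, inner_smul_left, inner_smul_right,
        inner_smul_right]
      have h2 : ((2 : ℂ)) = ((2 : ℝ) : ℂ) := by norm_num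
      rw [h2]
      simp only [Complex.conj_ofReal, ← Complex.ofReal_mul, Complex.sub_re,
        Complex.mul_re, Complex.ofReal_re, Complex.ofReal_im, zero_mul, sub_zero]
      rw [hSff, hSfx, hSxf, hSxx]
      ring
    -- now compute the goal
    simp only [ContinuousLinearMap.sub_apply, ContinuousLinearMap.add_apply,
      ContinuousLinearMap.comp_apply, ContinuousLinearMap.smul_apply,
      inner_sub_left, inner_add_left, inner_smul_left, Complex.sub_re,
      Complex.add_re, Complex.mul_re, Complex.conj_ofReal, Complex.ofReal_re,
      Complex.ofReal_im, zero_mul, sub_zero]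
    have hg1 : (⟪S₁ (Sinv (S₁ f)), f⟫_ℂ).re = r₁ := by
      rw [← hxdef, re_symm S₁ hS1_sa x f, hr1]
    have hg2 : (⟪S₂ (Sinv (S₂ f)), f⟫_ℂ).re = r₂ := by
      rw [← hydef, re_symm S₂ hS2_sa y f, hr2]
    rw [hg1, hg2, ← hp1, ← hp2]
    nlinarith [hupos, huexp, hrel]
  · -- upper bound
    intro f
    obtain ⟨h1, h2⟩ := setup f
    simp only [ContinuousLinearMap.sub_apply, ContinuousLinearMap.add_apply,
      ContinuousLinearMap.comp_apply, inner_sub_left, inner_add_left,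
      Complex.sub_re, Complex.add_re]
    have hg1 : (⟪S₁ (Sinv (S₁ f)), f⟫_ℂ).re = (⟪S₁ f, Sinv (S₁ f)⟫_ℂ).re :=
      re_symm S₁ hS1_sa (Sinv (S₁ f)) f
    have hg2 : (⟪S₂ (Sinv (S₂ f)), f⟫_ℂ).re = (⟪S₂ f, Sinv (S₂ f)⟫_ℂ).re :=
      re_symm S₂ hS2_sa (Sinv (S₂ f)) f
    have hSff : (⟪S f, f⟫_ℂ).re = (⟪S₁ f, f⟫_ℂ).re + (⟪S₂ f, f⟫_ℂ).re := by
      rw [hsum]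
      simp [ContinuousLinearMap.add_apply, inner_add_left, Complex.add_re]
    rw [hg1, hg2, hSff]
    linarith
end
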